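/- In any semigroup S, the transitive closure of the relation ∼_*^1 (where s ∼_*^1 t iff s = p_1 p_2 p_3 and t = p_1 p_3 p_2 for some p_1,p_2,p_3 ∈ S^1) equals ∼_s. -/

import Mathlib

/-- `s ∼ₛ¹ t`: `s = p₁⋯pₙ` and `t = p_{f(1)}⋯p_{f(n)}` for some `p_i ∈ S¹` and a
permutation `f` of `{1,…,n}` (encoded as a list permutation). -/
def SimS1 {S : Type*} [Semigroup S] (s t : S) : Prop :=
  ∃ l l' : List (WithOne S), l.Perm l' ∧ (s : WithOne S) = l.prod ∧ (t : WithOne S) = l'.prod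

/-- `∼ₛ`: the transitive closure of `∼ₛ¹`. -/
def SimS {S : Type*} [Semigroup S] : S → S → Prop := Relation.TransGen SimS1

/-- `s ∼*¹ t`: `s = p₁p₂p₃` and `t = p₁p₃p₂` for some `p₁,p₂,p₃ ∈ S¹`. -/
def SimStar1 {S : Type*} [Semigroup S] (s t : S) : Prop :=
  ∃ p₁ p₂ p₃ : WithOne S, (s : WithOne S) = p₁ * p₂ * p₃ ∧ p₁ * p₃ * p₂ = (t : WithOne S)

namespace SimStarAux

variable {S : Type*} [Semigroup S]

/-- The star relation on `WithOne S`. -/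
def R (a b : WithOne S) : Prop :=
  ∃ p₁ p₂ p₃ : WithOne S, a = p₁ * p₂ * p₃ ∧ p₁ * p₃ * p₂ = b

lemma R_mul_left (x : WithOne S) {a b : WithOne S} (h : R a b) : R (x * a) (x * b) := by
  obtain ⟨p₁, p₂, p₃, h1, h2⟩ := h
  exact ⟨x * p₁, p₂, p₃, by rw [h1]; simp [mul_assoc], by rw [← h2]; simp [mul_assoc]⟩

lemma mul_eq_one {a b : WithOne S} (h : a * b = 1) : a = 1 ∧ b = 1 := by
  rcases eq_or_ne a 1 with rfl | ha
  · simpa using h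
  · rcases eq_or_ne b 1 with rfl | hb
    · simpa using h
    · obtain ⟨x, rfl⟩ := WithOne.ne_one_iff_exists.mp ha
      obtain ⟨y, rfl⟩ := WithOne.ne_one_iff_exists.mp hb
      rw [← WithOne.coe_mul] at h
      exact absurd h (WithOne.coe_ne_one)

lemma R_ne_one {a b : WithOne S} (h : R a b) (ha : a ≠ 1) : b ≠ 1 := by
  obtain ⟨p₁, p₂, p₃, h1, h2⟩ := h
  intro hb
  rw [← h2] at hb
  obtain ⟨h12, h3⟩ := mul_eq_one hb
  obtain ⟨h1', h2'⟩ := mul_eq_one h12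
  apply ha
  rw [h1, h1', h2', h3]
  simp

lemma perm_rtg {l l' : List (WithOne S)} (h : l.Perm l') :
    Relation.ReflTransGen R l.prod l'.prod := by
  induction h with
  | nil => exact .refl
  | cons x h ih =>
      simp only [List.prod_cons]
      exact Relation.ReflTransGen.lift (fun a => x * a) (fun a b => R_mul_left x) _ _ ih
  | swap x y l =>
      simp only [List.prod_cons]
      refine Relation.ReflTransGen.head (b := x * l.prod * y) ?_ (Relation.ReflTransGen.single ?_)
      · exact ⟨1, y, x * l.prod, by simp [mul_assoc], by simp⟩
      · exact ⟨x, l.prod, y, rfl, by simp [mul_assoc]⟩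
  | trans h1 h2 ih1 ih2 => exact ih1.trans ih2

lemma rtg_coe {a b : WithOne S} (h : Relation.ReflTransGen R a b) :
    ∀ s : S, a = (s : WithOne S) → ∃ t : S, b = (t : WithOne S) ∧
      Relation.ReflTransGen SimStar1 s t := by
  induction h with
  | refl => exact fun s hs => ⟨s, hs, .refl⟩
  | @tail b c hab hbc ih =>
      intro s hs
      obtain ⟨u, rfl, hsu⟩ := ih s hs
      have hc : c ≠ 1 := R_ne_one hbc (WithOne.coe_ne_one)
      obtain ⟨v, rfl⟩ := WithOne.ne_one_iff_exists.mp hc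
      obtain ⟨p₁, p₂, p₃, h1, h2⟩ := hbc
      exact ⟨v, rfl, hsu.tail ⟨p₁, p₂, p₃, h1, h2⟩⟩

lemma simStar1_refl (s : S) : SimStar1 s s :=
  ⟨(s : WithOne S), 1, 1, by simp, by simp⟩

lemma rtg_to_tg {s t : S} (h : Relation.ReflTransGen SimStar1 s t) :
    Relation.TransGen SimStar1 s t := by
  rcases (Relation.reflTransGen_iff_eq_or_transGen.mp h) with rfl | h'
  · exact .single (simStar1_refl _)
  · exact h'

end SimStarAux

/-- The transitive closure of `∼*¹` equals `∼ₛ`. -/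
theorem transGen_simStar1_eq_simS {S : Type*} [Semigroup S] :
    ∀ s t : S, Relation.TransGen SimStar1 s t ↔ SimS s t := by
  intro s t
  constructor
  · intro h
    refine Relation.TransGen.mono ?_ _ _ h
    rintro a b ⟨p₁, p₂, p₃, h1, h2⟩
    exact ⟨[p₁, p₂, p₃], [p₁, p₃, p₂], (List.Perm.swap p₃ p₂ []).cons p₁,
      by simpa [mul_assoc] using h1, by simp [mul_assoc, ← h2]⟩
  · intro h
    refine Relation.TransGen.trans_induction_on h ?_ (fun _ _ h1 h2 => h1.trans h2)
    rintro a b ⟨l, l', hperm, ha, hb⟩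
    have := SimStarAux.perm_rtg hperm
    rw [← ha, ← hb] at this
    obtain ⟨t', ht', hst⟩ := SimStarAux.rtg_coe this a rfl
    have : t' = b := by
      apply WithOne.coe_inj.mp ht'.symm
    subst this
    exact SimStarAux.rtg_to_tg hst
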